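/- Let T = wT_φ on C(K) with φ a non-surjective homeomorphism of K into itself and L = ⋂_{n≥0} φⁿ(K). If T is invertible as an operator on C(L) and 0 < |λ| < 1/ρ(T⁻¹, C(L)), then (λI - T)C(K) = C(K), i.e., λI - T is surjective on C(K). -/

import Mathlib

open Filter Topology Set
open scoped ENNReal NNReal


lemma extend_two {X : Type*} [TopologicalSpace X] [NormalSpace X] {s : Set X}
    (hs : IsClosed s) (h : C(s, ℂ)) (c : ℝ) (hc0 : 0 ≤ c) (hc : ∀ y, ‖h y‖ ≤ c) :
    ∃ H : C(X, ℂ), (∀ y : s, H y = h y) ∧ ∀ x, ‖H x‖ ≤ 2 * c := by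
  have habs : ∀ (y : s), |(h y).re| ≤ c ∧ |(h y).im| ≤ c := fun y => by
    constructor
    · exact le_trans (by simpa using Complex.abs_re_le_norm (h y)) (hc y)
    · exact le_trans (by simpa using Complex.abs_im_le_norm (h y)) (hc y)
  obtain ⟨gre, hgre1, hgre2⟩ := ContinuousMap.exists_restrict_eq_forall_mem_of_closed
    (⟨fun y => (h y).re, (Complex.continuous_re).comp h.continuous⟩ : C(s,ℝ))
    (t := Set.Icc (-c) c) (fun y => abs_le.mp (habs y).1) ⟨c, by simp [hc0, neg_nonpos.mpr hc0, le_trans (neg_nonpos.mpr hc0) hc0]⟩ hs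
  obtain ⟨gim, hgim1, hgim2⟩ := ContinuousMap.exists_restrict_eq_forall_mem_of_closed
    (⟨fun y => (h y).im, (Complex.continuous_im).comp h.continuous⟩ : C(s,ℝ))
    (t := Set.Icc (-c) c) (fun y => abs_le.mp (habs y).2) ⟨c, by simp [hc0, le_trans (neg_nonpos.mpr hc0) hc0]⟩ hs
  refine ⟨⟨fun x => (gre x : ℂ) + (gim x : ℂ) * Complex.I,
    by fun_prop⟩, ?_, ?_⟩
  · intro y
    have h1 : gre y = (h y).re := by simpa using ContinuousMap.congr_fun hgre2 y
    have h2 : gim y = (h y).im := by simpa using ContinuousMap.congr_fun hgim2 y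
    simp only [ContinuousMap.coe_mk]
    rw [h1, h2, Complex.re_add_im]
  · intro x
    have := norm_add_le ((gre x : ℂ)) ((gim x : ℂ) * Complex.I)
    simp only [ContinuousMap.coe_mk]
    refine le_trans this ?_
    rw [norm_mul, Complex.norm_I, mul_one, Complex.norm_real, Complex.norm_real]
    have e1 := abs_le.mpr (hgre1 x)
    have e2 := abs_le.mpr (hgim1 x)
    rw [Real.norm_eq_abs, Real.norm_eq_abs]
    linarith
lemma solve_core {X : Type*} [TopologicalSpace X] [CompactSpace X] [T2Space X]
    (σ : X → X) (hσc : Continuous σ) (hσi : Function.Injective σ)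
    (ω : C(X, ℂ)) (μ : ℂ) (hμ : μ ≠ 0) (M : Set X) (hMc : IsClosed M)
    (hMinv : ∀ k ∈ M, σ k ∈ M)
    (hsmall : ∀ k ∈ M, ‖μ‖ < 8⁻¹ * ‖ω k‖)
    (g : C(X, ℂ)) :
    ∃ f : C(X, ℂ), ∀ k ∈ M, μ * f k - ω k * f (σ k) = g k := by
  have hμpos : (0:ℝ) < ‖μ‖ := norm_pos_iff.mpr hμ
  have hω : ∀ k ∈ M, ω k ≠ 0 := by
    intro k hk h0
    have := hsmall k hk
    rw [h0] at this
    simp only [norm_zero, mul_zero] at this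
    linarith
  -- the homeomorphism onto the range
  let eq0 : X ≃ Set.range σ := Equiv.ofInjective σ hσi
  have heq0 : Continuous (eq0 : X → Set.range σ) := Continuous.subtype_mk hσc _
  let e : X ≃ₜ Set.range σ := Continuous.homeoOfEquivCompactToT2 heq0
  have he : ∀ x : X, ((e x : Set.range σ) : X) = σ x := fun x => rfl
  let s : Set X := σ '' M
  have hscompact : IsCompact s := (hMc.isCompact).image hσc
  have hsc : IsClosed s := hscompact.isClosed
  haveI : CompactSpace s := isCompact_iff_compactSpace.mp hscompact
  let inv : s → X := fun y => e.symm ⟨y.1, image_subset_range σ M y.2⟩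
  have hinvc : Continuous inv :=
    e.symm.continuous.comp (Continuous.subtype_mk continuous_subtype_val _)
  have hσinv : ∀ y : s, σ (inv y) = y := by
    intro y
    have := e.apply_symm_apply ⟨y.1, image_subset_range σ M y.2⟩
    calc σ (inv y) = ((e (inv y) : Set.range σ) : X) := (he _).symm
    _ = y := by rw [this]
  have hinv_mem : ∀ y : s, inv y ∈ M := by
    rintro ⟨y, m, hm, rfl⟩
    have : σ (inv ⟨σ m, mem_image_of_mem σ hm⟩) = σ m := hσinv _
    rwa [hσi this]
  have hinvσ : ∀ k (hk : k ∈ M), inv ⟨σ k, mem_image_of_mem σ hk⟩ = k := by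
    intro k hk
    exact hσi (hσinv ⟨σ k, mem_image_of_mem σ hk⟩)
  -- operators
  have hωinv : ∀ y : s, ω (inv y) ≠ 0 := fun y => hω _ (hinv_mem y)
  let Q : C(X, ℂ) → C(s, ℂ) := fun F =>
    ⟨fun y => μ * F (inv y) / ω (inv y),
      ((continuous_const.mul (F.continuous.comp hinvc)).div
        (ω.continuous.comp hinvc) hωinv)⟩
  let c₀ : C(s, ℂ) :=
    ⟨fun y => -(g (inv y)) / ω (inv y),
      (((g.continuous.comp hinvc).neg).div (ω.continuous.comp hinvc) hωinv)⟩
  have hQnorm : ∀ F, ‖Q F‖ ≤ 8⁻¹ * ‖F‖ := by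
    intro F
    refine (ContinuousMap.norm_le _ (by positivity)).mpr ?_
    intro y
    have hb : ‖F (inv y)‖ ≤ ‖F‖ := F.norm_coe_le_norm _
    have hc : (0:ℝ) < ‖ω (inv y)‖ := norm_pos_iff.mpr (hωinv y)
    have ha : ‖μ‖ < 8⁻¹ * ‖ω (inv y)‖ := hsmall _ (hinv_mem y)
    show ‖μ * F (inv y) / ω (inv y)‖ ≤ 8⁻¹ * ‖F‖
    rw [norm_div, norm_mul, div_le_iff₀ hc]
    calc ‖μ‖ * ‖F (inv y)‖ ≤ (8⁻¹ * ‖ω (inv y)‖) * ‖F‖ :=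
          mul_le_mul ha.le hb (norm_nonneg _) (by positivity)
    _ = 8⁻¹ * ‖F‖ * ‖ω (inv y)‖ := by ring
  -- extension operator
  have extchoice : ∀ h : C(s, ℂ), ∃ H : C(X, ℂ),
      (∀ y : s, H y = h y) ∧ ∀ x, ‖H x‖ ≤ 2 * ‖h‖ :=
    fun h => extend_two hsc h ‖h‖ (norm_nonneg _) (fun y => h.norm_coe_le_norm y)
  choose Ext hE1 hE2 using extchoice
  have hEnorm : ∀ h, ‖Ext h‖ ≤ 2 * ‖h‖ := fun h =>
    (ContinuousMap.norm_le _ (by positivity)).mpr (hE2 h)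
  -- the iterative corrections
  let d : ℕ → C(X, ℂ) := fun j => Nat.rec (Ext c₀) (fun _ p => Ext (Q p)) j
  have hd0 : d 0 = Ext c₀ := rfl
  have hdsucc : ∀ j, d (j+1) = Ext (Q (d j)) := fun j => rfl
  have hdnorm : ∀ j, ‖d j‖ ≤ (4⁻¹:ℝ)^j * ‖d 0‖ := by
    intro j
    induction j with
    | zero => simp
    | succ j ih =>
      rw [hdsucc j]
      calc ‖Ext (Q (d j))‖ ≤ 2 * ‖Q (d j)‖ := hEnorm _
      _ ≤ 2 * (8⁻¹ * ‖d j‖) := by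
          have := hQnorm (d j); nlinarith [norm_nonneg (Q (d j))]
      _ = 4⁻¹ * ‖d j‖ := by ring
      _ ≤ 4⁻¹ * ((4⁻¹:ℝ)^j * ‖d 0‖) := by nlinarith
      _ = (4⁻¹:ℝ)^(j+1) * ‖d 0‖ := by ring
  have hsum : Summable d :=
    Summable.of_norm_bounded (Summable.mul_right _
      (summable_geometric_of_lt_one (by norm_num) (by norm_num))) hdnorm
  set f : C(X, ℂ) := ∑' j, d j with hf
  have hsump : ∀ x : X, Summable (fun j => d j x) := by
    intro x
    refine Summable.of_norm_bounded (g := fun j => (4⁻¹:ℝ)^j * ‖d 0‖) (Summable.mul_right _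
      (summable_geometric_of_lt_one (by norm_num) (by norm_num))) ?_
    intro j
    exact le_trans ((d j).norm_coe_le_norm x) (hdnorm j)
  have heval : ∀ x : X, f x = ∑' j, d j x := by
    intro x
    have := ContinuousLinearMap.map_tsum (ContinuousMap.evalCLM ℂ x) hsum
    simpa using this
  have key : ∀ y : s, f (y : X) = (μ * f (inv y) - g (inv y)) / ω (inv y) := by
    intro y
    have h1 : f (y : X) = ∑' j, d j y := heval _
    rw [h1, Summable.tsum_eq_zero_add (hsump (y : X))]
    have h2 : d 0 (y : X) = -(g (inv y)) / ω (inv y) := hE1 c₀ y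
    have h3 : ∀ j, d (j+1) (y : X) = (μ / ω (inv y)) * d j (inv y) := by
      intro j
      rw [hdsucc j]
      have := hE1 (Q (d j)) y
      rw [this]
      show μ * (d j) (inv y) / ω (inv y) = _
      ring
    simp only [h3]
    rw [tsum_mul_left, ← heval (inv y), h2]
    field_simp
    ring
  refine ⟨f, ?_⟩
  intro k hk
  have h1 := key ⟨σ k, mem_image_of_mem σ hk⟩
  rw [hinvσ k hk] at h1
  show μ * f k - ω k * f (σ k) = g k
  rw [h1, mul_div_cancel₀ _ (hω k hk)]
  ring

lemma range_iterate_antitone {X : Type*} (φ : X → X) {a b : ℕ} (h : a ≤ b) :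
    Set.range φ^[b] ⊆ Set.range φ^[a] := by
  obtain ⟨c, rfl⟩ := Nat.exists_eq_add_of_le h
  rintro _ ⟨x, rfl⟩
  exact ⟨φ^[c] x, (Function.iterate_add_apply φ a c x).symm⟩

lemma backall {X : Type*} [TopologicalSpace X]
    (σ : X → X) (hσc : Continuous σ) (ω : C(X, ℂ)) (μ : ℂ) (hμ : μ ≠ 0)
    (g : C(X, ℂ)) :
    ∀ t : ℕ, (∃ f : C(X, ℂ), ∀ k ∈ Set.range σ^[t], μ * f k - ω k * f (σ k) = g k) →
      ∃ f : C(X, ℂ), ∀ k, μ * f k - ω k * f (σ k) = g k := by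
  intro t
  induction t with
  | zero =>
    rintro ⟨f, hf⟩
    exact ⟨f, fun k => hf k ⟨k, rfl⟩⟩
  | succ t ih =>
    rintro ⟨f, hf⟩
    apply ih
    refine ⟨⟨fun k => (g k + ω k * f (σ k)) / μ,
      ((g.continuous.add (ω.continuous.mul (f.continuous.comp hσc))).div_const μ)⟩, ?_⟩
    rintro k ⟨x, rfl⟩
    have hmemσ : σ (σ^[t] x) ∈ Set.range σ^[t+1] :=
      ⟨x, Function.iterate_succ_apply' σ t x⟩
    have hFeq : ∀ k' ∈ Set.range σ^[t+1],
        (g k' + ω k' * f (σ k')) / μ = f k' := by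
      intro k' hk'
      have := hf k' hk'
      field_simp
      linear_combination -this
    show μ * ((g (σ^[t] x) + ω (σ^[t] x) * f (σ (σ^[t] x))) / μ) -
        ω (σ^[t] x) * ((g (σ (σ^[t] x)) + ω (σ (σ^[t] x)) * f (σ (σ (σ^[t] x)))) / μ) = _
    rw [hFeq (σ (σ^[t] x)) hmemσ]
    field_simp
    ring
  
lemma Tpow_apply {K : Type*} [TopologicalSpace K] (φ : K → K) (w : C(K, ℂ))
    (T : C(K, ℂ) →L[ℂ] C(K, ℂ)) (hT : ∀ (f : C(K, ℂ)) (k : K), T f k = w k * f (φ k)) :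
    ∀ (n : ℕ) (f : C(K, ℂ)) (k : K),
      (T ^ n) f k = (∏ i ∈ Finset.range n, w (φ^[i] k)) * f (φ^[n] k) := by
  intro n
  induction n with
  | zero => intro f k; simp [ContinuousLinearMap.one_apply]
  | succ n ih =>
    intro f k
    rw [pow_succ, ContinuousLinearMap.mul_apply, ih (T f) k, hT f (φ^[n] k),
      Finset.prod_range_succ, ← Function.iterate_succ_apply' φ n k]
    ring
set_option maxHeartbeats 1000000 in
/-- if `T` is invertible on `C(L)` (with inverse `S`) and
`0 < |λ| < 1/ρ(T⁻¹, C(L))`, then `λI - T` is surjective on `C(K)`. -/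
theorem stmt4 (K : Type*) [TopologicalSpace K] [CompactSpace K] [T2Space K]
    (φ : K → K) (hφc : Continuous φ) (hφi : Function.Injective φ)
    (hns : Set.range φ ≠ Set.univ)
    (w : C(K, ℂ)) (T : C(K, ℂ) →L[ℂ] C(K, ℂ))
    (hT : ∀ (f : C(K, ℂ)) (k : K), T f k = w k * f (φ k))
    (L : Set K) [CompactSpace L]
    (hL : L = ⋂ n : ℕ, φ^[n] '' Set.univ)
    (hφL : ∀ k ∈ L, φ k ∈ L)
    (TL : C(L, ℂ) →L[ℂ] C(L, ℂ))
    (hTL : ∀ (f : C(L, ℂ)) (k : L), TL f k = w k.1 * f ⟨φ k.1, hφL k.1 k.2⟩)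
    (S : C(L, ℂ) →L[ℂ] C(L, ℂ))
    (hS₁ : TL.comp S = ContinuousLinearMap.id ℂ C(L, ℂ))
    (hS₂ : S.comp TL = ContinuousLinearMap.id ℂ C(L, ℂ))
    (lam : ℂ) (hlam0 : lam ≠ 0)
    (hlam : (‖lam‖₊ : ENNReal) < (spectralRadius ℂ S)⁻¹) :
    Function.Surjective (lam • ContinuousLinearMap.id ℂ C(K, ℂ) - T) := by
  classical
  haveI hKne : Nonempty K := by
    by_contra h
    rw [not_nonempty_iff] at h
    apply hns
    ext x
    exact isEmptyElim x
  have hLr : L = ⋂ n : ℕ, Set.range φ^[n] := by simpa [Set.image_univ] using hL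
  have hCc : ∀ m : ℕ, IsCompact (Set.range φ^[m]) := fun m => isCompact_range (hφc.iterate m)
  have hLmem : ∀ (l : K), l ∈ L → ∀ n : ℕ, l ∈ Set.range φ^[n] := by
    intro l hl n
    rw [hLr] at hl
    exact Set.mem_iInter.mp hl n
  have hLne : L.Nonempty := by
    rw [hLr]
    apply IsCompact.nonempty_iInter_of_sequence_nonempty_isCompact_isClosed
    · intro i
      exact range_iterate_antitone φ (Nat.le_succ i)
    · intro i
      obtain ⟨x⟩ := hKne
      exact ⟨φ^[i] x, Set.mem_range_self x⟩
    · exact hCc 0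
    · intro i; exact (hCc i).isClosed
  haveI : Nonempty ↥L := hLne.to_subtype
  -- the restricted map on L
  let φL : L → L := fun l => ⟨φ l.1, hφL l.1 l.2⟩
  have hφLc : Continuous φL := (hφc.comp continuous_subtype_val).subtype_mk _
  have hφLi : Function.Injective φL := fun a b hab =>
    Subtype.ext (hφi (congrArg Subtype.val hab))
  have hφLit : ∀ (n : ℕ) (l : L), ((φL^[n] l : L) : K) = φ^[n] (l : K) := by
    intro n
    induction n with
    | zero => intro l; rfl
    | succ n ih =>
      intro l
      rw [Function.iterate_succ_apply', Function.iterate_succ_apply']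
      show φ ((φL^[n] l : L) : K) = _
      rw [ih l]
  have hφLs : Function.Surjective φL := by
    intro l
    obtain ⟨y0, hy0⟩ := hLmem l.1 l.2 1
    rw [Function.iterate_one] at hy0
    have hy0L : y0 ∈ L := by
      rw [hLr, Set.mem_iInter]
      intro j
      obtain ⟨x, hx⟩ := hLmem l.1 l.2 (j+1)
      rw [Function.iterate_succ_apply'] at hx
      exact ⟨x, hφi (by rw [hx, hy0])⟩
    exact ⟨⟨y0, hy0L⟩, Subtype.ext hy0⟩
  let eL : L ≃ₜ L :=
    Continuous.homeoOfEquivCompactToT2 (f := Equiv.ofBijective φL ⟨hφLi, hφLs⟩) hφLc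
  let ψ : L → L := eL.symm
  have hψc : Continuous ψ := eL.symm.continuous
  have hψφ : ∀ z : L, ψ (φL z) = z := fun z => eL.symm_apply_apply z
  -- w does not vanish on L
  have hw : ∀ l : L, w (l : K) ≠ 0 := by
    intro l h0
    have h1 : TL (S 1) = 1 := by
      have := congrArg (fun (A : C(L, ℂ) →L[ℂ] C(L, ℂ)) => A 1) hS₁
      simpa using this
    have h2 := hTL (S 1) l
    rw [h1, h0, zero_mul] at h2
    simpa using h2
  -- explicit formula for S
  have hSf : ∀ (h : C(L, ℂ)) (x : L), S h x = h (ψ x) / w ((ψ x : K)) := by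
    intro h x
    let S'h : C(L, ℂ) := ⟨fun x => h (ψ x) / w ((ψ x : K)),
      ((h.continuous.comp hψc).div ((w.continuous.comp continuous_subtype_val).comp hψc)
        (fun x => hw (ψ x)))⟩
    have hTLS' : TL S'h = h := by
      ext z
      rw [hTL S'h z]
      show w z.1 * (h (ψ (φL z)) / w ((ψ (φL z) : K))) = h z
      rw [hψφ z, mul_comm, div_mul_cancel₀ _ (hw z)]
    have hfin : S (TL S'h) = S'h := by
      have := congrArg (fun (A : C(L, ℂ) →L[ℂ] C(L, ℂ)) => A S'h) hS₂
      simpa using this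
    rw [hTLS'] at hfin
    rw [hfin]
    rfl
  -- iterated formula
  have hSn : ∀ (n : ℕ) (l : L),
      (S ^ n) 1 (φL^[n] l) * (∏ i ∈ Finset.range n, w ((φL^[i] l : L) : K)) = 1 := by
    intro n
    induction n with
    | zero => intro l; simp [ContinuousLinearMap.one_apply]
    | succ n ih =>
      intro l
      have hpt : φL^[n+1] l = φL (φL^[n] l) := Function.iterate_succ_apply' φL n l
      rw [pow_succ' S n, ContinuousLinearMap.mul_apply, hpt,
        hSf ((S ^ n) 1) (φL (φL^[n] l)), hψφ, Finset.prod_range_succ]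
      have hwnz := hw (φL^[n] l)
      rw [div_eq_mul_inv]
      calc (S ^ n) 1 (φL^[n] l) * (w ((φL^[n] l : L) : K))⁻¹ *
            ((∏ i ∈ Finset.range n, w ((φL^[i] l : L) : K)) * w ((φL^[n] l : L) : K))
          = ((S ^ n) 1 (φL^[n] l) * ∏ i ∈ Finset.range n, w ((φL^[i] l : L) : K)) *
            ((w ((φL^[n] l : L) : K))⁻¹ * w ((φL^[n] l : L) : K)) := by ring
      _ = 1 := by rw [ih l, inv_mul_cancel₀ hwnz, mul_one]
  -- key norm estimate along orbits in L
  have hkey : ∀ (n : ℕ) (l : L),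
      1 ≤ ‖S ^ n‖ * ∏ i ∈ Finset.range n, ‖w ((φL^[i] l : L) : K)‖ := by
    intro n l
    have h2 : (1 : ℝ) =
        ‖(S ^ n) 1 (φL^[n] l)‖ * ∏ i ∈ Finset.range n, ‖w ((φL^[i] l : L) : K)‖ := by
      rw [← norm_prod, ← norm_mul, hSn n l, norm_one]
    have h3 : ‖(S ^ n) 1 (φL^[n] l)‖ ≤ ‖S ^ n‖ := by
      calc ‖(S ^ n) 1 (φL^[n] l)‖ ≤ ‖(S ^ n) (1 : C(L, ℂ))‖ :=
            ContinuousMap.norm_coe_le_norm _ _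
      _ ≤ ‖S ^ n‖ * ‖(1 : C(L, ℂ))‖ := (S ^ n).le_opNorm 1
      _ = ‖S ^ n‖ := by rw [norm_one, mul_one]
    calc (1 : ℝ) = _ := h2
    _ ≤ _ := mul_le_mul_of_nonneg_right h3 (Finset.prod_nonneg fun i _ => norm_nonneg _)
  -- Gelfand formula: choose a good power n
  have hlam' : spectralRadius ℂ S < (↑‖lam‖₊)⁻¹ := ENNReal.lt_inv_iff_lt_inv.mp hlam
  obtain ⟨c, hc1, hc2⟩ := ENNReal.lt_iff_exists_nnreal_btwn.mp hlam'
  have hlamnn : ‖lam‖₊ ≠ 0 := by simpa using hlam0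
  have hq1 : (c : ℝ≥0∞) * ‖lam‖₊ < 1 := by
    rw [← ENNReal.lt_div_iff_mul_lt (Or.inl (by exact_mod_cast hlamnn))
      (Or.inl ENNReal.coe_ne_top), one_div]
    exact hc2
  have hqlt : ((c : ℝ) * ‖lam‖) < 1 := by
    have : ((c * ‖lam‖₊ : ℝ≥0) : ℝ≥0∞) < 1 := by push_cast; exact hq1
    rw [ENNReal.coe_lt_one_iff] at this
    exact_mod_cast this
  have hgel := spectrum.pow_nnnorm_pow_one_div_tendsto_nhds_spectralRadius S
  have hev1 : ∀ᶠ n : ℕ in atTop, (‖S ^ n‖₊ : ℝ≥0∞) ^ (1 / (n : ℝ)) < (c : ℝ≥0∞) :=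
    hgel.eventually_lt_const hc1
  have hev2 : ∀ᶠ n : ℕ in atTop, ((c : ℝ) * ‖lam‖) ^ n < 8⁻¹ := by
    have ht : Tendsto (fun n : ℕ => ((c : ℝ) * ‖lam‖) ^ n) atTop (𝓝 0) :=
      tendsto_pow_atTop_nhds_zero_of_lt_one (r := (c : ℝ) * ‖lam‖) (by positivity) hqlt
    exact ht.eventually_lt_const (by norm_num)
  obtain ⟨n, hn1, hevS, hevq⟩ : ∃ n : ℕ, 1 ≤ n ∧
      ((‖S ^ n‖₊ : ℝ≥0∞) ^ (1 / (n : ℝ)) < (c : ℝ≥0∞) ∧ ((c : ℝ) * ‖lam‖) ^ n < 8⁻¹) := by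
    obtain ⟨n, h⟩ := ((eventually_ge_atTop 1).and (hev1.and hev2)).exists
    exact ⟨n, h.1, h.2⟩
  have hnR : (0 : ℝ) < n := by exact_mod_cast hn1
  have hSn_lt : ‖S ^ n‖ < (c : ℝ) ^ n := by
    have h1 : (‖S ^ n‖₊ : ℝ≥0∞) < (c : ℝ≥0∞) ^ (n : ℝ) := by
      calc (‖S ^ n‖₊ : ℝ≥0∞) = ((‖S ^ n‖₊ : ℝ≥0∞) ^ (1 / (n : ℝ))) ^ (n : ℝ) := by
            rw [← ENNReal.rpow_mul, one_div, inv_mul_cancel₀ (ne_of_gt hnR), ENNReal.rpow_one]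
      _ < (c : ℝ≥0∞) ^ (n : ℝ) := ENNReal.rpow_lt_rpow hevS hnR
    rw [ENNReal.rpow_natCast, ← ENNReal.coe_pow] at h1
    have h2 := ENNReal.coe_lt_coe.mp h1
    exact_mod_cast h2
  have hfinal : ‖lam‖ ^ n * ‖S ^ n‖ < 8⁻¹ := by
    have hl0 : (0 : ℝ) < ‖lam‖ ^ n := pow_pos (norm_pos_iff.mpr hlam0) n
    calc ‖lam‖ ^ n * ‖S ^ n‖ < ‖lam‖ ^ n * (c : ℝ) ^ n :=
          mul_lt_mul_of_pos_left hSn_lt hl0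
    _ = ((c : ℝ) * ‖lam‖) ^ n := by rw [mul_pow]; ring
    _ < 8⁻¹ := hevq
  -- the weight of T^n and the good open set U
  let ω : C(K, ℂ) := ⟨fun k => ∏ i ∈ Finset.range n, w (φ^[i] k), by
    apply continuous_finset_prod
    intro i _
    exact w.continuous.comp (hφc.iterate i)⟩
  let U : Set K := {k : K | ‖lam ^ n‖ < 8⁻¹ * ‖ω k‖}
  have hUopen : IsOpen U := isOpen_lt continuous_const (continuous_const.mul (ω.continuous.norm))
  have hLU : L ⊆ U := by
    intro l hl
    have hk := hkey n ⟨l, hl⟩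
    have hP : ∏ i ∈ Finset.range n, ‖w ((φL^[i] (⟨l, hl⟩ : L) : L) : K)‖ = ‖ω l‖ := by
      show _ = ‖∏ i ∈ Finset.range n, w (φ^[i] l)‖
      rw [norm_prod]
      exact Finset.prod_congr rfl fun i _ => by rw [hφLit i ⟨l, hl⟩]
    rw [hP] at hk
    have hPpos : 0 < ‖ω l‖ := by
      by_contra hc0
      push_neg at hc0
      have h0 : ‖ω l‖ = 0 := le_antisymm hc0 (norm_nonneg _)
      rw [h0, mul_zero] at hk; linarith
    show ‖lam ^ n‖ < 8⁻¹ * ‖ω l‖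
    rw [norm_pow]
    calc ‖lam‖ ^ n = ‖lam‖ ^ n * 1 := (mul_one _).symm
    _ ≤ ‖lam‖ ^ n * (‖S ^ n‖ * ‖ω l‖) :=
        mul_le_mul_of_nonneg_left hk (by positivity)
    _ = (‖lam‖ ^ n * ‖S ^ n‖) * ‖ω l‖ := by ring
    _ < 8⁻¹ * ‖ω l‖ := mul_lt_mul_of_pos_right hfinal hPpos
  -- find a deep enough image inside U
  obtain ⟨m, hmU⟩ : ∃ m : ℕ, Set.range φ^[m] ⊆ U := by
    by_contra hcon
    push_neg at hcon
    have hne : ∀ m : ℕ, (Set.range φ^[m] ∩ Uᶜ).Nonempty := by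
      intro m
      obtain ⟨x, hx1, hx2⟩ := Set.not_subset.mp (hcon m)
      exact ⟨x, hx1, hx2⟩
    have hint := IsCompact.nonempty_iInter_of_sequence_nonempty_isCompact_isClosed
      (fun m => Set.range φ^[m] ∩ Uᶜ)
      (fun i => Set.inter_subset_inter_left _ (range_iterate_antitone φ (Nat.le_succ i)))
      hne ((hCc 0).inter_right hUopen.isClosed_compl)
      (fun i => ((hCc i).isClosed).inter hUopen.isClosed_compl)
    obtain ⟨x, hx⟩ := hint
    rw [Set.mem_iInter] at hx
    have hxL : x ∈ L := by
      rw [hLr, Set.mem_iInter]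
      exact fun j => (hx j).1
    exact (hx 0).2 (hLU hxL)
  -- solve on the deep part and extend back
  set σ : K → K := φ^[n] with hσdef
  have hσc : Continuous σ := hφc.iterate n
  have hσi : Function.Injective σ := Function.Injective.iterate hφi n
  have hμ : lam ^ n ≠ 0 := pow_ne_zero n hlam0
  have hMdef : Set.range σ^[m] = Set.range φ^[n * m] := by
    rw [hσdef, ← Function.iterate_mul]
  have hMU : Set.range σ^[m] ⊆ U := by
    rw [hMdef]
    exact (range_iterate_antitone φ (Nat.le_mul_of_pos_left m (by omega))).trans hmU
  have hMc : IsClosed (Set.range σ^[m]) := by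
    rw [hMdef]; exact (hCc (n * m)).isClosed
  have hMinv : ∀ k ∈ Set.range σ^[m], σ k ∈ Set.range σ^[m] := by
    rintro k ⟨x, rfl⟩
    exact ⟨σ x, by rw [← Function.iterate_succ_apply σ m x, Function.iterate_succ_apply' σ m x]⟩
  have hsmall : ∀ k ∈ Set.range σ^[m], ‖lam ^ n‖ < 8⁻¹ * ‖ω k‖ := fun k hk => hMU hk
  intro g
  obtain ⟨f0, hf0⟩ :=
    solve_core σ hσc hσi ω (lam ^ n) hμ (Set.range σ^[m]) hMc hMinv hsmall g
  obtain ⟨f, hfeq⟩ := backall σ hσc ω (lam ^ n) hμ g m ⟨f0, hf0⟩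
  -- assemble via the geometric sum factorisation
  set x : C(K, ℂ) →L[ℂ] C(K, ℂ) := lam • (1 : C(K, ℂ) →L[ℂ] C(K, ℂ)) with hxdef
  have hcomm : Commute x T := by
    rw [hxdef, ← Algebra.algebraMap_eq_smul_one]
    exact Algebra.commutes lam T
  have hfact := hcomm.mul_geom_sum₂ n
  refine ⟨(∑ i ∈ Finset.range n, x ^ i * T ^ (n - 1 - i)) f, ?_⟩
  have hxid : lam • ContinuousLinearMap.id ℂ C(K, ℂ) - T = x - T := by
    rw [hxdef, ContinuousLinearMap.one_def]
  rw [hxid]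
  have hmulapp : (x - T) ((∑ i ∈ Finset.range n, x ^ i * T ^ (n - 1 - i)) f)
      = ((x - T) * (∑ i ∈ Finset.range n, x ^ i * T ^ (n - 1 - i))) f := rfl
  rw [hmulapp, hfact]
  have hxn : x ^ n = lam ^ n • (1 : C(K, ℂ) →L[ℂ] C(K, ℂ)) := by
    rw [hxdef, ← Algebra.algebraMap_eq_smul_one, ← map_pow, Algebra.algebraMap_eq_smul_one]
  ext k
  rw [ContinuousLinearMap.sub_apply, hxn]
  rw [ContinuousMap.sub_apply]
  rw [ContinuousLinearMap.smul_apply, ContinuousLinearMap.one_apply]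
  rw [ContinuousMap.smul_apply, smul_eq_mul]
  rw [Tpow_apply φ w T hT n f k]
  exact hfeq k
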